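/- Let A = A0 + A1ε ∈ DQ^{n×k} and B = B0 + B1ε ∈ DQ^{l×m} be dual quaternion matrices. Set A11 = A1·L_{A0}, A2 = R_{A0}·A11, A3 = R_{A0}, B2 = R_{B0}·B1, A4 = R_{A2}·R_{A0}, A5 = −A4·A1·A0†, A6 = R_{A4}·A5, B3 = B2·L_{B0}. Then a pair X = X0 + X1ε ∈ DQ^{k×m}, Y = Y0 + Y1ε ∈ DQ^{n×l} satisfies the dual quaternion matrix equation AX = YB if and only if there exist quaternion matrices W1, ..., W8 of appropriate sizes such that, with U1 = L_{A6}·W5 + W6·R_{B0}, U2 = L_{A4}·W7 + W8·R_{B3}, and W = A2†·A3·[Y0·B1 + Y1·B0 − A1·A0†·Y0·B0] + L_{A2}·W2, one has Y0 = L_{A3}·U1 + U2·R_{B0}, Y1 = A4†·(−A5·U1·B0 − A4·U2·B2)·B0† + L_{A4}·W3 + W4·R_{B0}, X0 = A0†·Y0·B0 + L_{A0}·W, and X1 = A0†·[Y0·B1 + Y1·B0 − A1·A0†·Y0·B0 − A11·W] + L_{A0}·W1; in particular the equation AX = YB is always solvable. -/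
import Mathlib

open Matrix

/-- Quaternion matrices of size `p × q`. -/
abbrev QM (p q : ℕ) := Matrix (Fin p) (Fin q) (Quaternion ℝ)

/-- `Ad` is a Moore–Penrose inverse of the quaternion matrix `A`. -/
def IsMP {p q : ℕ} (A : QM p q) (Ad : QM q p) : Prop :=
  A * Ad * A = A ∧ Ad * A * Ad = Ad ∧ (A * Ad)ᴴ = A * Ad ∧ (Ad * A)ᴴ = Ad * A

/-- The dual quaternion matrix `A0 + A1 ε`, realized as a matrix over the
dual numbers (dual quaternions) `DualNumber (Quaternion ℝ)`. -/
noncomputable def dm {p q : ℕ} (A0 A1 : QM p q) :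
    Matrix (Fin p) (Fin q) (DualNumber (Quaternion ℝ)) :=
  A0.map TrivSqZeroExt.inl + A1.map TrivSqZeroExt.inr

/-- The rank of a quaternion matrix: the dimension (over `ℍ`) of the left
`ℍ`-submodule spanned by its rows. -/
noncomputable def qrank {m n : Type*} (A : Matrix m n (Quaternion ℝ)) : ℕ :=
  Module.finrank (Quaternion ℝ)
    (Submodule.span (Quaternion ℝ) (Set.range (fun i : m => fun j : n => A i j)))

theorem dm_mul {p q r : ℕ} (A0 A1 : QM p q) (B0 B1 : QM q r) :
    dm A0 A1 * dm B0 B1 = dm (A0 * B0) (A0 * B1 + A1 * B0) := by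
  refine Matrix.ext fun i j => TrivSqZeroExt.ext ?_ ?_
  · simp [dm, Matrix.mul_apply, TrivSqZeroExt.fst_sum, TrivSqZeroExt.fst_mul]
  · simp [dm, Matrix.mul_apply, TrivSqZeroExt.snd_sum, TrivSqZeroExt.snd_mul,
      Finset.sum_add_distrib, smul_eq_mul, MulOpposite.smul_eq_mul_unop]

theorem dm_inj {p q : ℕ} {A0 A1 B0 B1 : QM p q} : dm A0 A1 = dm B0 B1 ↔ A0 = B0 ∧ A1 = B1 := by
  constructor
  · intro h
    constructor
    · exact Matrix.ext fun i j => by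
        have := congrArg (fun M => TrivSqZeroExt.fst (M i j)) h
        simpa [dm] using this
    · exact Matrix.ext fun i j => by
        have := congrArg (fun M => TrivSqZeroExt.snd (M i j)) h
        simpa [dm] using this
  · rintro ⟨rfl, rfl⟩; rfl

theorem mp_unique {p q : ℕ} {A : QM p q} {X Y : QM q p}
    (hX : IsMP A X) (hY : IsMP A Y) : X = Y := by
  obtain ⟨x1, x2, x3, x4⟩ := hX
  obtain ⟨y1, y2, y3, y4⟩ := hY
  have hposA : Aᴴ = Aᴴ * (A * Y) := by
    conv_lhs => rw [← y1]
    rw [Matrix.conjTranspose_mul (A * Y) A, y3]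
  have e1 : A * X = A * X * (A * Y) := by
    conv_lhs => rw [← x3]
    rw [Matrix.conjTranspose_mul A X, hposA, ← Matrix.mul_assoc Xᴴ Aᴴ (A * Y),
      ← Matrix.conjTranspose_mul A X, x3]
  have hposA' : Aᴴ = Aᴴ * (A * X) := by
    conv_lhs => rw [← x1]
    rw [Matrix.conjTranspose_mul (A * X) A, x3]
  have e2 : A * Y = A * Y * (A * X) := by
    conv_lhs => rw [← y3]
    rw [Matrix.conjTranspose_mul A Y, hposA', ← Matrix.mul_assoc Yᴴ Aᴴ (A * X),
      ← Matrix.conjTranspose_mul A Y, y3]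
  have eAX : A * X = A * Y := by
    have h := congrArg Matrix.conjTranspose e1
    rw [Matrix.conjTranspose_mul (A * X) (A * Y), x3, y3] at h
    exact h.trans e2.symm
  have hposB : Aᴴ = Y * A * Aᴴ := by
    conv_lhs => rw [← y1, Matrix.mul_assoc]
    rw [Matrix.conjTranspose_mul A (Y * A), y4]
  have f1 : X * A = Y * A * (X * A) := by
    conv_lhs => rw [← x4]
    rw [Matrix.conjTranspose_mul X A, hposB, Matrix.mul_assoc (Y * A) Aᴴ Xᴴ,
      ← Matrix.conjTranspose_mul X A, x4]
  have hposB' : Aᴴ = X * A * Aᴴ := by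
    conv_lhs => rw [← x1, Matrix.mul_assoc]
    rw [Matrix.conjTranspose_mul A (X * A), x4]
  have f2 : Y * A = X * A * (Y * A) := by
    conv_lhs => rw [← y4]
    rw [Matrix.conjTranspose_mul Y A, hposB', Matrix.mul_assoc (X * A) Aᴴ Yᴴ,
      ← Matrix.conjTranspose_mul Y A, y4]
  have eXA : X * A = Y * A := by
    have h := congrArg Matrix.conjTranspose f1
    rw [Matrix.conjTranspose_mul (Y * A) (X * A), x4, y4] at h
    exact h.trans f2.symm
  calc X = X * A * X := x2.symm
    _ = X * (A * X) := Matrix.mul_assoc ..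
    _ = X * (A * Y) := by rw [eAX]
    _ = X * A * Y := (Matrix.mul_assoc ..).symm
    _ = Y * A * Y := by rw [eXA]
    _ = Y := y2

theorem herm_idem_mp {p : ℕ} {E : QM p p} (h1 : E * E = E) (h2 : Eᴴ = E) : IsMP E E :=
  ⟨by rw [h1, h1], by rw [h1, h1], by rw [h1, h2], by rw [h1, h2]⟩

theorem mp_zero {p q : ℕ} : IsMP (0 : QM p q) 0 := by
  refine ⟨?_, ?_, ?_, ?_⟩ <;> simp
set_option maxHeartbeats 2000000 in
/-- the dual quaternion matrix equation `A X = Y B`: a pair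
`(X, Y)` is a solution iff it has the displayed form; in particular the
equation is always solvable. -/
theorem stmt17 {n k l m : ℕ}
    (A0 A1 : QM n k) (B0 B1 : QM l m)
    (A0d : QM k n) (hA0d : IsMP A0 A0d)
    (B0d : QM m l) (hB0d : IsMP B0 B0d)
    (A11 : QM n k) (hA11 : A11 = A1 * (1 - A0d * A0))
    (A2 : QM n k) (hA2 : A2 = (1 - A0 * A0d) * A11)
    (A2d : QM k n) (hA2d : IsMP A2 A2d)
    (A3 : QM n n) (hA3 : A3 = 1 - A0 * A0d)
    (A3d : QM n n) (hA3d : IsMP A3 A3d)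
    (B2 : QM l m) (hB2 : B2 = (1 - B0 * B0d) * B1)
    (A4 : QM n n) (hA4 : A4 = (1 - A2 * A2d) * (1 - A0 * A0d))
    (A4d : QM n n) (hA4d : IsMP A4 A4d)
    (A5 : QM n n) (hA5 : A5 = -(A4 * A1 * A0d))
    (A6 : QM n n) (hA6 : A6 = (1 - A4 * A4d) * A5)
    (A6d : QM n n) (hA6d : IsMP A6 A6d)
    (B3 : QM l m) (hB3 : B3 = B2 * (1 - B0d * B0))
    (B3d : QM m l) (hB3d : IsMP B3 B3d) :
    (∀ (X0 X1 : QM k m) (Y0 Y1 : QM n l),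
      dm A0 A1 * dm X0 X1 = dm Y0 Y1 * dm B0 B1 ↔
        ∃ (W1 W2 : QM k m) (W3 W4 W5 W6 W7 W8 : QM n l)
          (U1 U2 : QM n l) (W : QM k m),
          U1 = (1 - A6d * A6) * W5 + W6 * (1 - B0 * B0d) ∧
          U2 = (1 - A4d * A4) * W7 + W8 * (1 - B3 * B3d) ∧
          W = A2d * A3 * (Y0 * B1 + Y1 * B0 - A1 * A0d * (Y0 * B0))
                + (1 - A2d * A2) * W2 ∧
          Y0 = (1 - A3d * A3) * U1 + U2 * (1 - B0 * B0d) ∧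
          Y1 = A4d * (-(A5 * U1 * B0) - A4 * U2 * B2) * B0d
                + (1 - A4d * A4) * W3 + W4 * (1 - B0 * B0d) ∧
          X0 = A0d * (Y0 * B0) + (1 - A0d * A0) * W ∧
          X1 = A0d * (Y0 * B1 + Y1 * B0 - A1 * A0d * (Y0 * B0) - A11 * W)
                + (1 - A0d * A0) * W1) ∧
    (∃ (X : Matrix (Fin k) (Fin m) (DualNumber (Quaternion ℝ)))
       (Y : Matrix (Fin n) (Fin l) (DualNumber (Quaternion ℝ))),
        dm A0 A1 * X = Y * dm B0 B1) := by
  obtain ⟨h01, h02, h03, h04⟩ := hA0d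
  obtain ⟨hb1, hb2, hb3, hb4⟩ := hB0d
  obtain ⟨h21, h22, h23, h24⟩ := hA2d
  obtain ⟨hc1, hc2, hc3, hc4⟩ := hB3d
  -- basic idempotents
  have hPP : (A0 * A0d) * (A0 * A0d) = A0 * A0d := by rw [← Matrix.mul_assoc, h01]
  have hQQ : (A0d * A0) * (A0d * A0) = A0d * A0 := by rw [← Matrix.mul_assoc, h02]
  have hR0idem : (1 - A0 * A0d) * (1 - A0 * A0d) = 1 - A0 * A0d := by
    simp only [Matrix.sub_mul, Matrix.mul_sub, Matrix.one_mul, Matrix.mul_one, hPP]; abel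
  have hL0idem : (1 - A0d * A0) * (1 - A0d * A0) = 1 - A0d * A0 := by
    simp only [Matrix.sub_mul, Matrix.mul_sub, Matrix.one_mul, Matrix.mul_one, hQQ]; abel
  have hR0herm : (1 - A0 * A0d)ᴴ = 1 - A0 * A0d := by
    rw [Matrix.conjTranspose_sub, Matrix.conjTranspose_one, h03]
  -- A3
  have hA3d3 : A3d = A3 := by
    refine mp_unique hA3d (herm_idem_mp ?_ ?_)
    · rw [hA3]; exact hR0idem
    · rw [hA3]; exact hR0herm
  -- A2 structure
  have hA2her : A2ᴴ = (1 - A0d * A0) * A1ᴴ * (1 - A0 * A0d) := by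
    rw [hA2, hA11, Matrix.conjTranspose_mul, Matrix.conjTranspose_mul]
    simp only [Matrix.conjTranspose_sub, Matrix.conjTranspose_one, h03, h04]
  have e1 : A2d = A2d * A2dᴴ * A2ᴴ := by
    calc A2d = A2d * A2 * A2d := h22.symm
      _ = A2d * (A2 * A2d) := Matrix.mul_assoc ..
      _ = A2d * (A2 * A2d)ᴴ := by rw [h23]
      _ = A2d * (A2dᴴ * A2ᴴ) := by rw [Matrix.conjTranspose_mul]
      _ = A2d * A2dᴴ * A2ᴴ := (Matrix.mul_assoc ..).symm
  have e2 : A2ᴴ * (1 - A0 * A0d) = A2ᴴ := by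
    rw [hA2her, Matrix.mul_assoc ((1 - A0d * A0) * A1ᴴ), hR0idem]
  have hA2dR0 : A2d * (1 - A0 * A0d) = A2d := by
    calc A2d * (1 - A0 * A0d) = A2d * A2dᴴ * A2ᴴ * (1 - A0 * A0d) := by rw [← e1]
      _ = A2d * A2dᴴ * (A2ᴴ * (1 - A0 * A0d)) := Matrix.mul_assoc ..
      _ = A2d * A2dᴴ * A2ᴴ := by rw [e2]
      _ = A2d := e1.symm
  have e3 : A2d = A2ᴴ * A2dᴴ * A2d := by
    calc A2d = A2d * A2 * A2d := h22.symm
      _ = (A2d * A2)ᴴ * A2d := by conv_lhs => rw [← h24]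
      _ = A2ᴴ * A2dᴴ * A2d := by rw [Matrix.conjTranspose_mul]
  have e4 : (1 - A0d * A0) * A2ᴴ = A2ᴴ := by
    rw [hA2her, ← Matrix.mul_assoc, ← Matrix.mul_assoc, hL0idem]
  have hL0A2d : (1 - A0d * A0) * A2d = A2d := by
    calc (1 - A0d * A0) * A2d = (1 - A0d * A0) * (A2ᴴ * A2dᴴ * A2d) := by conv_lhs => rw [e3]
      _ = (1 - A0d * A0) * (A2ᴴ * A2dᴴ) * A2d := (Matrix.mul_assoc ..).symm
      _ = (1 - A0d * A0) * A2ᴴ * A2dᴴ * A2d := by rw [← Matrix.mul_assoc]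
      _ = A2ᴴ * A2dᴴ * A2d := by rw [e4]
      _ = A2d := e3.symm
  -- A4
  have hR0A2 : (1 - A0 * A0d) * A2 = A2 := by
    rw [hA2, ← Matrix.mul_assoc, hR0idem]
  have hA4alt : A4 = (1 - A0 * A0d) - A2 * A2d := by
    rw [hA4, Matrix.sub_mul, Matrix.one_mul, Matrix.mul_assoc, hA2dR0]
  have hA4her : A4ᴴ = A4 := by
    rw [hA4alt, Matrix.conjTranspose_sub, hR0herm, h23]
  have hR0A0 : (1 - A0 * A0d) * A0 = 0 := by
    rw [Matrix.sub_mul, Matrix.one_mul, h01, sub_self]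
  have b7 : A2d * A0 = 0 := by
    calc A2d * A0 = (A2d * (1 - A0 * A0d)) * A0 := by rw [hA2dR0]
      _ = A2d * ((1 - A0 * A0d) * A0) := Matrix.mul_assoc ..
      _ = 0 := by rw [hR0A0, Matrix.mul_zero]
  have hPA2 : A0 * A0d * A2 = 0 := by
    have h := hR0A2
    rw [Matrix.sub_mul, Matrix.one_mul] at h
    exact sub_eq_self.mp h
  have hA2A2dP : A2 * A2d * (A0 * A0d) = 0 := by
    rw [Matrix.mul_assoc, ← Matrix.mul_assoc A2d A0 A0d, b7, Matrix.zero_mul, Matrix.mul_zero]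
  have hPA2A2d : A0 * A0d * (A2 * A2d) = 0 := by
    rw [← Matrix.mul_assoc, hPA2, Matrix.zero_mul]
  have hA2A2d2 : A2 * A2d * (A2 * A2d) = A2 * A2d := by
    rw [← Matrix.mul_assoc, h21]
  have hA4idem : A4 * A4 = A4 := by
    rw [hA4alt]
    simp only [Matrix.sub_mul, Matrix.mul_sub, Matrix.one_mul, Matrix.mul_one, hPP,
      hA2A2dP, hPA2A2d, hA2A2d2]
    abel
  have hA4d4 : A4d = A4 := mp_unique hA4d (herm_idem_mp hA4idem hA4her)
  -- A5, A6
  have hA4A5 : A4 * A5 = A5 := by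
    rw [hA5, Matrix.mul_neg, ← Matrix.mul_assoc, ← Matrix.mul_assoc, hA4idem]
  have hA6z : A6 = 0 := by
    rw [hA6, hA4d4, hA4idem, Matrix.sub_mul, Matrix.one_mul, hA4A5, sub_self]
  have hA6d0 : A6d = 0 := by
    rw [hA6z] at hA6d
    exact mp_unique hA6d mp_zero
  -- bare identities (left-assoc)
  have hRbB0 : (1 - B0 * B0d) * B0 = 0 := by
    rw [Matrix.sub_mul, Matrix.one_mul, hb1, sub_self]
  have hQL0 : (A0d * A0) * (1 - A0d * A0) = 0 := by
    rw [Matrix.mul_sub, Matrix.mul_one, hQQ, sub_self]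
  have b8 : A0d * A0 * A2d = 0 := by
    calc A0d * A0 * A2d = (A0d * A0) * ((1 - A0d * A0) * A2d) := by rw [hL0A2d]
      _ = ((A0d * A0) * (1 - A0d * A0)) * A2d := (Matrix.mul_assoc ..).symm
      _ = 0 := by rw [hQL0, Matrix.zero_mul]
  have b9 : A2d * A11 = A2d * A2 := by
    conv_lhs => rw [← hA2dR0]
    rw [Matrix.mul_assoc, ← hA2]
  have b12 : A4 * A0 = 0 := by
    rw [hA4alt, Matrix.sub_mul, hR0A0, Matrix.mul_assoc, b7, Matrix.mul_zero, zero_sub, neg_zero]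
  have b13 : A4 * A2 = 0 := by
    rw [hA4alt, Matrix.sub_mul, hR0A2, h21, sub_self]
  have hA4R0 : A4 * (1 - A0 * A0d) = A4 := by
    rw [hA4alt, Matrix.sub_mul, hR0idem, Matrix.mul_assoc, hA2dR0, ← hA4alt]
  have b14 : A4 * A11 = 0 := by
    calc A4 * A11 = (A4 * (1 - A0 * A0d)) * A11 := by rw [hA4R0]
      _ = A4 * ((1 - A0 * A0d) * A11) := Matrix.mul_assoc ..
      _ = A4 * A2 := by rw [← hA2]
      _ = 0 := b13
  have b15 : A4 * A1 * A0d = -A5 := by rw [hA5, neg_neg]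
  have b16 : A0 * A0d * A11 = A11 - A2 := by
    rw [hA2, Matrix.sub_mul, Matrix.one_mul]; abel
  have b17 : A1 * A0d * A0 = A1 - A11 := by
    rw [hA11, Matrix.mul_sub, Matrix.mul_one, Matrix.mul_assoc]; abel
  have b18 : B0 * B0d * B1 = B1 - B2 := by
    rw [hB2, Matrix.sub_mul, Matrix.one_mul]; abel
  have b19 : B2 * B0d * B0 = B2 - B3 := by
    rw [hB3, Matrix.mul_sub, Matrix.mul_one, Matrix.mul_assoc]; abel
  -- M-versions and tail versions of the rewrite rules
  have rAM : ∀ {r : ℕ} (M : QM k r), A0 * (A0d * (A0 * M)) = A0 * M := by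
    intro r M; rw [← Matrix.mul_assoc, ← Matrix.mul_assoc, h01]
  have rAt : A0 * (A0d * A0) = A0 := by rw [← Matrix.mul_assoc, h01]
  have rAdM : ∀ {r : ℕ} (M : QM n r), A0d * (A0 * (A0d * M)) = A0d * M := by
    intro r M; rw [← Matrix.mul_assoc, ← Matrix.mul_assoc, h02]
  have rAdt : A0d * (A0 * A0d) = A0d := by rw [← Matrix.mul_assoc, h02]
  have rBM : ∀ {r : ℕ} (M : QM m r), B0 * (B0d * (B0 * M)) = B0 * M := by
    intro r M; rw [← Matrix.mul_assoc, ← Matrix.mul_assoc, hb1]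
  have rBt : B0 * (B0d * B0) = B0 := by rw [← Matrix.mul_assoc, hb1]
  have rBdM : ∀ {r : ℕ} (M : QM l r), B0d * (B0 * (B0d * M)) = B0d * M := by
    intro r M; rw [← Matrix.mul_assoc, ← Matrix.mul_assoc, hb2]
  have rBdt : B0d * (B0 * B0d) = B0d := by rw [← Matrix.mul_assoc, hb2]
  have rA2M : ∀ {r : ℕ} (M : QM k r), A2 * (A2d * (A2 * M)) = A2 * M := by
    intro r M; rw [← Matrix.mul_assoc, ← Matrix.mul_assoc, h21]
  have rA2t : A2 * (A2d * A2) = A2 := by rw [← Matrix.mul_assoc, h21]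
  have rA2dM : ∀ {r : ℕ} (M : QM n r), A2d * (A2 * (A2d * M)) = A2d * M := by
    intro r M; rw [← Matrix.mul_assoc, ← Matrix.mul_assoc, h22]
  have rA2dt : A2d * (A2 * A2d) = A2d := by rw [← Matrix.mul_assoc, h22]
  have rb7M : ∀ {r : ℕ} (M : QM k r), A2d * (A0 * M) = 0 := by
    intro r M; rw [← Matrix.mul_assoc, b7, Matrix.zero_mul]
  have rb8M : ∀ {r : ℕ} (M : QM n r), A0d * (A0 * (A2d * M)) = 0 := by
    intro r M; rw [← Matrix.mul_assoc, ← Matrix.mul_assoc, b8, Matrix.zero_mul]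
  have rb8t : A0d * (A0 * A2d) = 0 := by rw [← Matrix.mul_assoc, b8]
  have rb9M : ∀ {r : ℕ} (M : QM k r), A2d * (A11 * M) = A2d * (A2 * M) := by
    intro r M; rw [← Matrix.mul_assoc, ← Matrix.mul_assoc, b9]
  have rb10M : ∀ {r : ℕ} (M : QM n r), A4 * (A4 * M) = A4 * M := by
    intro r M; rw [← Matrix.mul_assoc, hA4idem]
  have rb11M : ∀ {r : ℕ} (M : QM n r), A4 * (A5 * M) = A5 * M := by
    intro r M; rw [← Matrix.mul_assoc, hA4A5]
  have rb12M : ∀ {r : ℕ} (M : QM k r), A4 * (A0 * M) = 0 := by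
    intro r M; rw [← Matrix.mul_assoc, b12, Matrix.zero_mul]
  have rb13M : ∀ {r : ℕ} (M : QM k r), A4 * (A2 * M) = 0 := by
    intro r M; rw [← Matrix.mul_assoc, b13, Matrix.zero_mul]
  have rb14M : ∀ {r : ℕ} (M : QM k r), A4 * (A11 * M) = 0 := by
    intro r M; rw [← Matrix.mul_assoc, b14, Matrix.zero_mul]
  have rb15M : ∀ {r : ℕ} (M : QM n r), A4 * (A1 * (A0d * M)) = -(A5 * M) := by
    intro r M; rw [← Matrix.mul_assoc, ← Matrix.mul_assoc, b15, Matrix.neg_mul]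
  have rb15t : A4 * (A1 * A0d) = -A5 := by rw [← Matrix.mul_assoc, b15]
  have rb16M : ∀ {r : ℕ} (M : QM k r), A0 * (A0d * (A11 * M)) = A11 * M - A2 * M := by
    intro r M; rw [← Matrix.mul_assoc, ← Matrix.mul_assoc, b16, Matrix.sub_mul]
  have rb16t : A0 * (A0d * A11) = A11 - A2 := by rw [← Matrix.mul_assoc, b16]
  have rb17M : ∀ {r : ℕ} (M : QM k r), A1 * (A0d * (A0 * M)) = A1 * M - A11 * M := by
    intro r M; rw [← Matrix.mul_assoc, ← Matrix.mul_assoc, b17, Matrix.sub_mul]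
  have rb17t : A1 * (A0d * A0) = A1 - A11 := by rw [← Matrix.mul_assoc, b17]
  have rb18M : ∀ {r : ℕ} (M : QM m r), B0 * (B0d * (B1 * M)) = B1 * M - B2 * M := by
    intro r M; rw [← Matrix.mul_assoc, ← Matrix.mul_assoc, b18, Matrix.sub_mul]
  have rb18t : B0 * (B0d * B1) = B1 - B2 := by rw [← Matrix.mul_assoc, b18]
  have rb19M : ∀ {r : ℕ} (M : QM m r), B2 * (B0d * (B0 * M)) = B2 * M - B3 * M := by
    intro r M; rw [← Matrix.mul_assoc, ← Matrix.mul_assoc, b19, Matrix.sub_mul]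
  have rb19t : B2 * (B0d * B0) = B2 - B3 := by rw [← Matrix.mul_assoc, b19]
  have rb20M : ∀ {r : ℕ} (M : QM m r), B3 * (B3d * (B3 * M)) = B3 * M := by
    intro r M; rw [← Matrix.mul_assoc, ← Matrix.mul_assoc, hc1]
  have rb20t : B3 * (B3d * B3) = B3 := by rw [← Matrix.mul_assoc, hc1]
  have hA0L0 : A0 * (1 - A0d * A0) = 0 := by
    rw [Matrix.mul_sub, Matrix.mul_one, ← Matrix.mul_assoc, h01, sub_self]
  have bA0A2d : A0 * A2d = 0 := by
    calc A0 * A2d = A0 * ((1 - A0d * A0) * A2d) := by rw [hL0A2d]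
      _ = (A0 * (1 - A0d * A0)) * A2d := (Matrix.mul_assoc ..).symm
      _ = 0 := by rw [hA0L0, Matrix.zero_mul]
  have rA0A2dM : ∀ {r : ℕ} (M : QM n r), A0 * (A2d * M) = 0 := by
    intro r M; rw [← Matrix.mul_assoc, bA0A2d, Matrix.zero_mul]
  refine ⟨fun X0 X1 Y0 Y1 => ?_, ⟨0, 0, by rw [Matrix.mul_zero, Matrix.zero_mul]⟩⟩
  constructor
  · -- forward direction
    intro h
    rw [dm_mul, dm_mul, dm_inj] at h
    obtain ⟨hz1, hz2⟩ := h
    have rz1M : ∀ {r : ℕ} (M : QM m r), Y0 * (B0 * M) = A0 * (X0 * M) := by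
      intro r M; rw [← Matrix.mul_assoc, ← Matrix.mul_assoc, hz1]
    have rz1t : Y0 * B0 = A0 * X0 := hz1.symm
    have rz2t : Y1 * B0 = A0 * X1 + A1 * X0 - Y0 * B1 := by rw [hz2]; abel
    have rz2M : ∀ {r : ℕ} (M : QM m r),
        Y1 * (B0 * M) = A0 * (X1 * M) + A1 * (X0 * M) - Y0 * (B1 * M) := by
      intro r M
      have h2 := congrArg (fun Z => Z * M) rz2t
      simp only [Matrix.sub_mul, Matrix.add_mul, Matrix.mul_assoc] at h2
      exact h2
    have key1 : A4 * (A1 * (A0d * (A0 * X0))) = A4 * (A1 * X0) := by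
      rw [rb17M, Matrix.mul_sub, rb14M, sub_zero]
    have hstar0 : A4 * (A1 * X0) = -(A5 * (Y0 * B0)) := by
      rw [← key1, hz1, rb15M]
    have hstar : A4 * (Y1 * B0) = -(A5 * (Y0 * B0)) - A4 * (Y0 * B1) := by
      have h2 := congrArg (fun M : QM n m => A4 * M) hz2
      simp only [Matrix.mul_add] at h2
      rw [← Matrix.mul_assoc A4 A0 X1, b12, Matrix.zero_mul, zero_add, hstar0] at h2
      rw [h2]; abel
    have rstY1M : ∀ {r : ℕ} (M : QM m r),
        A4 * (Y1 * (B0 * M)) = -(A5 * (Y0 * (B0 * M))) - A4 * (Y0 * (B1 * M)) := by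
      intro r M
      have h2 := congrArg (fun Z => Z * M) hstar
      simp only [Matrix.sub_mul, Matrix.neg_mul, Matrix.mul_assoc] at h2
      exact h2
    have hstarB1 : A4 * (Y0 * B1) = -(A5 * (Y0 * B0)) - A4 * (Y1 * B0) := by
      rw [hstar]; abel
    have rstB1M : ∀ {r : ℕ} (M : QM m r),
        A4 * (Y0 * (B1 * M)) = -(A5 * (Y0 * (B0 * M))) - A4 * (Y1 * (B0 * M)) := by
      intro r M
      have h2 := congrArg (fun Z => Z * M) hstarB1
      simp only [Matrix.sub_mul, Matrix.neg_mul, Matrix.mul_assoc] at h2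
      exact h2
    have hY0B3 : A4 * (Y0 * B3) = 0 := by
      rw [hB3, hB2]
      simp only [Matrix.mul_add, Matrix.add_mul, Matrix.mul_sub, Matrix.sub_mul,
        Matrix.mul_one, Matrix.one_mul, Matrix.mul_zero, Matrix.zero_mul,
        Matrix.mul_neg, Matrix.neg_mul, Matrix.mul_assoc,
        rz1M, rz1t, rstB1M, hstarB1, rb12M, b12, rBM, rBt, rBdM, rBdt,
        rb11M, hA4A5, rb10M, hA4idem]
      abel
    have rY0B3M : ∀ {r : ℕ} (M : QM m r), A4 * (Y0 * (B3 * M)) = 0 := by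
      intro r M
      have h2 := congrArg (fun Z => Z * M) hY0B3
      simp only [Matrix.mul_assoc, Matrix.zero_mul] at h2
      exact h2
    refine ⟨X1, X0,
      Y1 - A4d * (-(A5 * Y0 * B0) - A4 * ((1 - A0 * A0d) * Y0) * B2) * B0d,
      A4 * (Y1 - A4d * (-(A5 * Y0 * B0) - A4 * ((1 - A0 * A0d) * Y0) * B2) * B0d),
      Y0, 0, (1 - A0 * A0d) * Y0, A4 * Y0, Y0, (1 - A0 * A0d) * Y0,
      A2d * A3 * (Y0 * B1 + Y1 * B0 - A1 * A0d * (Y0 * B0)) + (1 - A2d * A2) * X0,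
      ?_, ?_, rfl, ?_, ?_, ?_, ?_⟩
    · rw [hA6d0]; simp
    · rw [hA4d4]
      simp only [Matrix.mul_add, Matrix.add_mul, Matrix.mul_sub, Matrix.sub_mul,
        Matrix.mul_one, Matrix.one_mul, Matrix.mul_zero, Matrix.zero_mul,
        Matrix.mul_neg, Matrix.neg_mul, Matrix.mul_assoc,
        rb10M, hA4idem, rb12M, b12, rY0B3M, hY0B3]
      abel
    · rw [hA3d3, hA3]
      simp only [Matrix.mul_add, Matrix.add_mul, Matrix.mul_sub, Matrix.sub_mul,
        Matrix.mul_one, Matrix.one_mul, Matrix.mul_zero, Matrix.zero_mul,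
        Matrix.mul_neg, Matrix.neg_mul, Matrix.mul_assoc,
        rAM, rAt, rz1M, rz1t]
      abel
    · rw [hA4d4, hB2]
      simp only [Matrix.mul_add, Matrix.add_mul, Matrix.mul_sub, Matrix.sub_mul,
        Matrix.mul_one, Matrix.one_mul, Matrix.mul_zero, Matrix.zero_mul,
        Matrix.mul_neg, Matrix.neg_mul, Matrix.mul_assoc,
        rb10M, hA4idem, rb11M, hA4A5, rb12M, b12, rBdM, rBdt, rBM, rBt,
        rz1M, rz1t, rstY1M, hstar]
      abel
    · rw [hA3]
      simp only [Matrix.mul_add, Matrix.add_mul, Matrix.mul_sub, Matrix.sub_mul,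
        Matrix.mul_one, Matrix.one_mul, Matrix.mul_zero, Matrix.zero_mul,
        Matrix.mul_neg, Matrix.neg_mul, Matrix.mul_assoc,
        rz1M, rz1t, rz2M, rz2t, rb7M, b7, rb8M, rb8t, rb9M, b9,
        rb17M, rb17t, rAM, rAt, rAdM, rAdt, rA0A2dM, bA0A2d, rA2dM, rA2dt]
      abel
    · rw [hA3]
      simp only [Matrix.mul_add, Matrix.add_mul, Matrix.mul_sub, Matrix.sub_mul,
        Matrix.mul_one, Matrix.one_mul, Matrix.mul_zero, Matrix.zero_mul,
        Matrix.mul_neg, Matrix.neg_mul, Matrix.mul_assoc,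
        rz1M, rz1t, rz2M, rz2t, rb7M, b7, rb8M, rb8t, rb9M, b9,
        rb17M, rb17t, rAM, rAt, rAdM, rAdt, rA0A2dM, bA0A2d, rA2dM, rA2dt]
      abel
  · -- backward direction
    rintro ⟨W1, W2, W3, W4, W5, W6, W7, W8, U1, U2, W, hU1, hU2, hW, hY0, hY1, hX0, hX1⟩
    set S := Y0 * B1 + Y1 * B0 - A1 * A0d * (Y0 * B0) with hSdef
    rw [dm_mul, dm_mul, dm_inj]
    have hPY0B0 : A0 * (A0d * (Y0 * B0)) = Y0 * B0 := by
      rw [hY0, hU1, hU2, hA3d3, hA3, hA4d4, hA6d0, hA6z]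
      simp only [Matrix.mul_add, Matrix.add_mul, Matrix.mul_sub, Matrix.sub_mul,
        Matrix.mul_one, Matrix.one_mul, Matrix.mul_zero, Matrix.zero_mul,
        Matrix.mul_neg, Matrix.neg_mul, Matrix.mul_assoc,
        rAM, rAt, rAdM, rAdt, rBM, rBt, rBdM, rBdt, rb10M, hA4idem,
        rb12M, b12, rb20M, rb20t]
      abel
    have hS4 : A4 * S = 0 := by
      rw [hSdef, hY0, hY1, hU1, hU2, hA3d3, hA3, hA4d4, hA6d0, hA6z]
      simp only [Matrix.mul_add, Matrix.add_mul, Matrix.mul_sub, Matrix.sub_mul,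
        Matrix.mul_one, Matrix.one_mul, Matrix.mul_zero, Matrix.zero_mul,
        Matrix.mul_neg, Matrix.neg_mul, Matrix.mul_assoc,
        rAM, rAt, rAdM, rAdt, rBM, rBt, rBdM, rBdt, rA2M, rA2t, rA2dM, rA2dt,
        rb7M, b7, rb8M, rb8t, rb9M, b9, rb10M, hA4idem, rb11M, hA4A5,
        rb12M, b12, rb13M, b13, rb14M, b14, rb15M, rb15t, rb16M, rb16t,
        rb17M, rb17t, rb18M, rb18t, rb19M, rb19t, rb20M, rb20t, bA0A2d, rA0A2dM]
      abel
    have h5x : S - A0 * (A0d * S) - A2 * (A2d * S) = 0 := by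
      have h9 : A4 * S = 0 := hS4
      rw [hA4alt, Matrix.sub_mul, Matrix.sub_mul, Matrix.one_mul,
        Matrix.mul_assoc, Matrix.mul_assoc] at h9
      exact h9
    have hAW : A2 * W = S - A0 * (A0d * S) := by
      rw [hW, hA3]
      simp only [Matrix.mul_add, Matrix.mul_sub, Matrix.sub_mul, Matrix.one_mul,
        Matrix.mul_one, Matrix.mul_assoc, rA2M, rb7M, Matrix.mul_zero, Matrix.zero_mul,
        sub_self, sub_zero, add_zero, zero_add]
      rw [← sub_eq_zero]
      have h7 : A2 * (A2d * S) - (S - A0 * (A0d * S)) =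
          -(S - A0 * (A0d * S) - A2 * (A2d * S)) := by abel
      rw [h7, h5x, neg_zero]
    constructor
    · rw [hX0]
      simp only [Matrix.mul_add, Matrix.mul_sub, Matrix.sub_mul, Matrix.mul_one,
        Matrix.one_mul, Matrix.mul_assoc, rAM, hPY0B0]
      abel
    · rw [hX1, hX0]
      simp only [Matrix.mul_add, Matrix.add_mul, Matrix.mul_sub, Matrix.sub_mul,
        Matrix.mul_one, Matrix.one_mul, Matrix.mul_zero, Matrix.zero_mul,
        Matrix.mul_neg, Matrix.neg_mul, Matrix.mul_assoc,
        rAM, rAt, rAdM, rAdt, rb16M, rb16t, rb17M, rb17t, hAW, hPY0B0]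
      rw [hSdef]
      simp only [Matrix.mul_assoc]
      abel
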